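/- If a binary code has neither a bracketed string nor a separation issue, then the threshold graph it encodes is almost alternating. -/

import Mathlib

/-!
Common definitions: threshold graphs from binary codes, counts of matchings and
independent sets, lex and colex graphs, and almost alternating codes.

A binary code is a `List Bool` whose head is the *leftmost* (most significant,
last added) digit; `true` stands for the digit `1` and `false` for `0`.
Reading the code from right to left, each digit adds a vertex: a `1` adds a
dominating vertex and a `0` adds an isolated vertex.  Equivalently, the vertex
at position `i` (from the left) is adjacent to every vertex to its right iff
its digit is `1`.  Note that the value of the rightmost digit (the star) never
affects the graph.
-/

/-- The threshold graph encoded by a binary code `σ`. -/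
def threshOf (σ : List Bool) : SimpleGraph (Fin σ.length) where
  Adj i j := i ≠ j ∧ σ.get (min i j) = true
  symm := by
    constructor
    intro i j h
    refine ⟨h.1.symm, ?_⟩
    rw [min_comm]
    exact h.2
  loopless := by
    constructor
    intro i h
    exact h.1 rfl

/-- The number of edges of a graph. -/
noncomputable def edgeCount {V : Type*} (G : SimpleGraph V) : ℕ := Nat.card G.edgeSet

/-- `M` is a matching of `G`: a set of pairwise disjoint edges of `G`. -/
def IsMatchingSet {V : Type*} (G : SimpleGraph V) (M : Finset (Sym2 V)) : Prop :=
  (∀ e ∈ M, e ∈ G.edgeSet) ∧ ∀ e ∈ M, ∀ f ∈ M, e ≠ f → ∀ v : V, v ∈ e → v ∉ f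

/-- `m(G)`: the total number of matchings of `G` (including the empty matching). -/
noncomputable def matchCount {V : Type*} (G : SimpleGraph V) : ℕ :=
  Nat.card {M : Finset (Sym2 V) // IsMatchingSet G M}

/-- `m_k(G)`: the number of matchings of `G` of size `k`. -/
noncomputable def matchCountK {V : Type*} (G : SimpleGraph V) (k : ℕ) : ℕ :=
  Nat.card {M : Finset (Sym2 V) // IsMatchingSet G M ∧ M.card = k}

/-- `i(G)`: the number of independent sets of `G` (including the empty set). -/
noncomputable def indCount {V : Type*} (G : SimpleGraph V) : ℕ :=
  Nat.card {S : Finset V // ∀ u ∈ S, ∀ v ∈ S, ¬ G.Adj u v}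

/-- `i_k(G)`: the number of independent sets of `G` of size `k`. -/
noncomputable def indCountK {V : Type*} (G : SimpleGraph V) (k : ℕ) : ℕ :=
  Nat.card {S : Finset V // (∀ u ∈ S, ∀ v ∈ S, ¬ G.Adj u v) ∧ S.card = k}

/-- Two codes encode the same threshold graph: they have the same length and agree
except possibly in the rightmost (starred) digit. -/
def CodeEquiv (σ τ : List Bool) : Prop := σ.length = τ.length ∧ σ.dropLast = τ.dropLast

/-- Words that are concatenations of copies of the letters `a = 01` and `b = 10`. -/
inductive IsABWord : List Bool → Prop
  | nil : IsABWord []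
  | a {w : List Bool} : IsABWord w → IsABWord (false :: true :: w)
  | b {w : List Bool} : IsABWord w → IsABWord (true :: false :: w)

/-- `w` is a concatenation of `α` copies of the letter `a = 01` and `β` copies of the
letter `b = 10`, in some order. -/
def IsABWordWith (α β : ℕ) (w : List Bool) : Prop :=
  ∃ ls : List (List Bool), (∀ x ∈ ls, x = [false, true] ∨ x = [true, false]) ∧
    ls.count [false, true] = α ∧ ls.count [true, false] = β ∧ w = ls.flatten

/-- A code is almost alternating if (possibly after reinterpreting the starred rightmost
digit) it is an initial constant block followed by a word in the letters `a = 01` and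
`b = 10`, either using the rightmost digit as the final digit of the last letter
(unstarred case) or keeping the rightmost digit separate after the word (starred case). -/
def IsAlmostAltCode (σ : List Bool) : Prop :=
  ∃ τ : List Bool, CodeEquiv σ τ ∧
    ∃ (t : ℕ) (c : Bool) (w : List Bool), IsABWord w ∧
      (τ = List.replicate t c ++ w ∨ ∃ d : Bool, τ = List.replicate t c ++ w ++ [d])

/-- A small almost alternating code: the initial block consists of `0`'s (or is empty). -/
def IsSmallAACode (σ : List Bool) : Prop :=
  ∃ τ : List Bool, CodeEquiv σ τ ∧
    ∃ (t : ℕ) (w : List Bool), IsABWord w ∧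
      (τ = List.replicate t false ++ w ∨ ∃ d : Bool, τ = List.replicate t false ++ w ++ [d])

/-- A large almost alternating code: the initial block is a nonempty block of `1`'s. -/
def IsLargeAACode (σ : List Bool) : Prop :=
  ∃ τ : List Bool, CodeEquiv σ τ ∧
    ∃ (t : ℕ) (w : List Bool), 1 ≤ t ∧ IsABWord w ∧
      (τ = List.replicate t true ++ w ∨ ∃ d : Bool, τ = List.replicate t true ++ w ++ [d])

/-- A code has a bracketed string if (possibly after reinterpreting the starred rightmost
digit) it contains a substring `1 0^j 1` or `0 1^j 0` with `j ≥ 3`. -/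
def HasBracketedString (σ : List Bool) : Prop :=
  ∃ τ : List Bool, CodeEquiv σ τ ∧ ∃ (x y : List Bool) (j : ℕ), 3 ≤ j ∧
    (τ = x ++ [true] ++ List.replicate j false ++ [true] ++ y ∨
     τ = x ++ [false] ++ List.replicate j true ++ [false] ++ y)

/-- A code has a separation issue if it contains two pairs of repeated digits separated by
a substring of odd length, where the first pair is immediately preceded by the opposite
digit and the second pair is followed by at least one further digit. -/
def HasSeparationIssue (σ : List Bool) : Prop :=
  ∃ (x m y : List Bool) (d c : Bool),
    Odd m.length ∧ y ≠ [] ∧ σ = x ++ [!d, d, d] ++ m ++ [c, c] ++ y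

/-- The colex graph `C(n,e)`: the graph on `Fin n` whose edges are the first `e` pairs in
the colexicographic order.  The pair `{i, j}` with `i < j` has rank `j(j-1)/2 + i` in
this order. -/
def colexGraph (n e : ℕ) : SimpleGraph (Fin n) where
  Adj i j := i ≠ j ∧ max i.val j.val * (max i.val j.val - 1) / 2 + min i.val j.val < e
  symm := by
    constructor
    intro i j h
    refine ⟨h.1.symm, ?_⟩
    rw [max_comm j.val i.val, min_comm j.val i.val]
    exact h.2
  loopless := by
    constructor
    intro i h
    exact h.1 rfl

/-- The lex graph `L(n,e)`: the graph on `Fin n` whose edges are the first `e` pairs in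
the lexicographic order.  The pair `{i, j}` with `i < j` has rank
`i(n-1) - i(i-1)/2 + (j - i - 1)` in this order. -/
def lexGraph (n e : ℕ) : SimpleGraph (Fin n) where
  Adj i j := i ≠ j ∧
    min i.val j.val * (n - 1) - min i.val j.val * (min i.val j.val - 1) / 2
      + (max i.val j.val - min i.val j.val - 1) < e
  symm := by
    constructor
    intro i j h
    refine ⟨h.1.symm, ?_⟩
    rw [max_comm j.val i.val, min_comm j.val i.val]
    exact h.2
  loopless := by
    constructor
    intro i h
    exact h.1 rfl


section NoObstructionAux

/-- A list is "good up to the star": every aligned pair of digits, except possibly a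
pair touching the end of the list, consists of two distinct digits. -/
inductive GoodStar : List Bool → Prop
  | nil : GoodStar []
  | single (d : Bool) : GoodStar [d]
  | pair (d e : Bool) : GoodStar [d, e]
  | cons {s : List Bool} (d e : Bool) (h : d ≠ e) (hs : GoodStar s) : GoodStar (d :: e :: s)

lemma goodStar_of_pairs : ∀ s : List Bool,
    (∀ i : ℕ, 2*i+2 < s.length → s[2*i]? ≠ s[2*i+1]?) → GoodStar s
  | [], _ => .nil
  | [d], _ => .single d
  | [d, e], _ => .pair d e
  | d :: e :: f :: r, h => by
    have hne : d ≠ e := by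
      have h0 := h 0 (by simp)
      simpa using h0
    refine .cons d e hne (goodStar_of_pairs (f :: r) ?_)
    intro i hi
    have hlen : 2*(i+1)+2 < (d :: e :: f :: r).length := by
      simp only [List.length_cons]
      simp only [List.length_cons] at hi
      omega
    have h2 := h (i+1) hlen
    have e1 : (d :: e :: f :: r)[2*(i+1)]? = (f :: r)[2*i]? := by
      rw [show 2*(i+1) = 2*i+1+1 by ring]
      simp
    have e2 : (d :: e :: f :: r)[2*(i+1)+1]? = (f :: r)[2*i+1]? := by
      rw [show 2*(i+1)+1 = (2*i+1)+1+1 by ring]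
      simp
    rw [e1, e2] at h2
    exact h2

lemma isABWord_cons2 {d e : Bool} (h : d ≠ e) {w : List Bool} (hw : IsABWord w) :
    IsABWord (d :: e :: w) := by
  match d, e, h with
  | false, true, _ => exact IsABWord.a hw
  | true, false, _ => exact IsABWord.b hw
  | false, false, h => exact absurd rfl h
  | true, true, h => exact absurd rfl h

lemma dropLast_cons2_eq {s s' : List Bool} (hl : s'.length = s.length)
    (hd : s'.dropLast = s.dropLast) (d e : Bool) :
    (d :: e :: s').dropLast = (d :: e :: s).dropLast := by
  cases s with
  | nil =>
    cases s' with
    | nil => rfl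
    | cons y u => simp at hl
  | cons x t =>
    cases s' with
    | nil => simp at hl
    | cons y u =>
      rw [List.dropLast_cons₂, List.dropLast_cons₂, List.dropLast_cons₂,
        List.dropLast_cons₂, hd]

lemma goodStar_decomp {s : List Bool} (h : GoodStar s) :
    ∃ s' w : List Bool, s'.length = s.length ∧ s'.dropLast = s.dropLast ∧ IsABWord w ∧
      (s' = w ∨ ∃ d, s' = w ++ [d]) := by
  induction h with
  | nil => exact ⟨[], [], rfl, rfl, .nil, .inl rfl⟩
  | single d => exact ⟨[d], [], rfl, rfl, .nil, .inr ⟨d, rfl⟩⟩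
  | pair d e =>
    exact ⟨[d, !d], [d, !d], by simp, by simp, isABWord_cons2 (by cases d <;> simp) .nil,
      .inl rfl⟩
  | cons d e hne hs ih =>
    obtain ⟨s', w, hl, hd, hw, hc⟩ := ih
    refine ⟨d :: e :: s', d :: e :: w, by simp [hl], dropLast_cons2_eq hl hd d e,
      isABWord_cons2 hne hw, ?_⟩
    rcases hc with rfl | ⟨d0, rfl⟩
    · exact .inl rfl
    · exact .inr ⟨d0, by simp⟩

lemma isAlmostAlt_of_goodStar (σ : List Bool) (t : ℕ) (c : Bool)
    (ht : σ.take t = List.replicate t c) (hg : GoodStar (σ.drop t)) :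
    IsAlmostAltCode σ := by
  obtain ⟨s', w, hl, hd, hw, hc⟩ := goodStar_decomp hg
  refine ⟨σ.take t ++ s', ⟨?_, ?_⟩, t, c, w, hw, ?_⟩
  · have htle : t ≤ σ.length := by
      have := congrArg List.length ht
      simp only [List.length_take, List.length_replicate] at this
      omega
    conv_lhs => rw [← List.take_append_drop t σ]
    simp only [List.length_append, List.length_take, List.length_drop, hl]
  · by_cases hnil : σ.drop t = []
    · have hs0 : s' = [] := by
        rw [hnil] at hl
        simpa using List.length_eq_zero_iff.mp hl
      subst hs0
      conv_lhs => rw [← List.take_append_drop t σ, hnil]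
    · have hs' : s' ≠ [] := by
        intro h0
        apply hnil
        apply List.length_eq_zero_iff.mp
        rw [← hl, h0]
        rfl
      conv_lhs => rw [← List.take_append_drop t σ]
      rw [List.dropLast_append_of_ne_nil hnil, List.dropLast_append_of_ne_nil hs', hd]
  · rcases hc with rfl | ⟨d0, rfl⟩
    · exact .inl (by rw [ht])
    · exact .inr ⟨d0, by rw [ht, List.append_assoc]⟩

lemma drop_eq_rep (σ : List Bool) (r e : ℕ) (d : Bool) (hre : r ≤ e) (hen : e ≤ σ.length)
    (h : ∀ j, r ≤ j → j < e → σ[j]? = some d) :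
    σ.drop r = List.replicate (e - r) d ++ σ.drop e := by
  conv_lhs => rw [← List.take_append_drop (e - r) (σ.drop r)]
  have h2 : (σ.drop r).drop (e - r) = σ.drop e := by
    rw [List.drop_drop]
    congr 1
    omega
  rw [h2]
  congr 1
  rw [List.eq_replicate_iff]
  constructor
  · simp only [List.length_take, List.length_drop]
    omega
  · intro b hb
    obtain ⟨i, hi, hbi⟩ := List.mem_iff_getElem.mp hb
    have hi' : i < e - r := by
      simp only [List.length_take, List.length_drop] at hi
      omega
    have hri : r + i < σ.length := by omega
    have hb2 : b = σ[r+i]'hri := by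
      rw [← hbi, List.getElem_take, List.getElem_drop]
    have hv := h (r+i) (by omega) (by omega)
    rw [List.getElem?_eq_getElem hri] at hv
    rw [hb2]
    exact Option.some.inj hv

lemma bool_eq_not {a b : Bool} (h : a ≠ b) : a = !b := by
  cases a <;> cases b <;> simp_all

end NoObstructionAux

/-- A binary code with neither a bracketed string nor a separation
issue encodes an almost alternating threshold graph. -/
theorem no_obstruction_implies_almost_alternating (σ : List Bool)
    (h1 : ¬ HasBracketedString σ) (h2 : ¬ HasSeparationIssue σ) :
    IsAlmostAltCode σ := by
  classical
  rcases List.eq_nil_or_concat σ with rfl | _hconcat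
  · exact ⟨[], ⟨rfl, rfl⟩, 0, false, [], .nil, .inl rfl⟩
  clear _hconcat
  by_cases hσnil : σ = []
  · exact ⟨[], by subst hσnil; exact ⟨rfl, rfl⟩, 0, false, [], .nil, .inl rfl⟩
  set n := σ.length with hn
  have hn0 : 0 < n := List.length_pos_iff.mpr hσnil
  have h0n : (0:ℕ) < σ.length := hn0
  set c := σ[0]'h0n with hc
  have hσ0 : σ[0]? = some c := List.getElem?_eq_getElem h0n
  by_cases hconst : ∀ i, i < n → σ[i]? = some c
  · -- constant code
    have hrep : σ = List.replicate n c := by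
      rw [List.eq_replicate_iff]
      refine ⟨rfl, ?_⟩
      intro b hb
      obtain ⟨i, hi, hbi⟩ := List.mem_iff_getElem.mp hb
      have := hconst i hi
      rw [List.getElem?_eq_getElem hi] at this
      rw [← hbi]
      exact Option.some.inj this
    refine isAlmostAlt_of_goodStar σ n c ?_ ?_
    · rw [show σ.take n = σ from List.take_length, hrep]
    · have hdn : σ.drop n = [] := by simp [hn]
      rw [hdn]
      exact .nil
  · push_neg at hconst
    have hQ : ∃ i, i < n ∧ σ[i]? ≠ some c := hconst
    set k := Nat.find hQ with hk
    obtain ⟨hkn, hkne⟩ : k < n ∧ σ[k]? ≠ some c := by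
      rw [hk]
      exact Nat.find_spec hQ
    have hbelow : ∀ j, j < k → σ[j]? = some c := by
      intro j hj
      have hj' : j < Nat.find hQ := by rw [← hk]; exact hj
      have hmin := Nat.find_min hQ hj'
      push_neg at hmin
      exact hmin (by omega)
    have hk1 : 1 ≤ k := by
      by_contra hk0
      have : k = 0 := by omega
      rw [this] at hkne
      exact hkne hσ0
    have hkc : σ[k]? = some (!c) := by
      rw [List.getElem?_eq_getElem hkn]
      have : σ[k]'hkn ≠ c := by
        intro h
        apply hkne
        rw [List.getElem?_eq_getElem hkn, h]
      rw [bool_eq_not this]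
    have htake : σ.take k = List.replicate k c := by
      rw [List.eq_replicate_iff]
      constructor
      · simp only [List.length_take]
        omega
      · intro b hb
        obtain ⟨i, hi, hbi⟩ := List.mem_iff_getElem.mp hb
        have hik : i < k := by
          simp only [List.length_take] at hi
          omega
        have hin : i < n := by omega
        have := hbelow i hik
        rw [List.getElem?_eq_getElem hin] at this
        rw [← hbi, List.getElem_take]
        exact Option.some.inj this
    -- the pair predicate
    set Pp : ℕ → Prop := fun p => k ≤ p ∧ p + 2 < n ∧ σ[p]? = σ[p+1]? with hPp
    -- run-start sublemma
    have runstart : ∀ p, Pp p → σ[p-1]? ≠ σ[p]? := by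
      rintro p ⟨hkp, hp2, hpe⟩ hcon
      set R : ℕ → Prop := fun j => 1 ≤ j ∧ σ[j-1]? ≠ σ[j]? with hRdef
      have hRk : R k := by
        refine ⟨hk1, ?_⟩
        rw [hbelow (k-1) (by omega), hkc]
        cases c <;> simp
      set r := Nat.findGreatest R p with hr
      have hrspec : R r := Nat.findGreatest_spec hkp hRk
      have hrk : k ≤ r := Nat.le_findGreatest hkp hRk
      have hrp : r ≤ p := Nat.findGreatest_le p
      have hgr : ∀ j, r < j → j ≤ p → σ[j-1]? = σ[j]? := by
        intro j hj1 hj2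
        have hng := Nat.findGreatest_is_greatest hj1 hj2
        by_contra hne
        exact hng ⟨by omega, hne⟩
      have hrltp : r < p := by
        rcases lt_or_eq_of_le hrp with h | h
        · exact h
        · exact absurd (h ▸ hcon) hrspec.2
      have chain : ∀ j, j ≤ p + 1 → r ≤ j → σ[j]? = σ[r]? := by
        intro j
        induction j with
        | zero =>
          intro _ h
          have : r = 0 := by omega
          rw [this]
        | succ m ih =>
          intro hm1 hm2
          rcases Nat.lt_or_ge r (m+1) with hlt | hge
          · have hrm : r ≤ m := by omega
            have hm' : σ[m]? = σ[r]? := ih (by omega) hrm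
            have step : σ[m]? = σ[m+1]? := by
              rcases Nat.lt_or_ge m p with hmp | hmp
              · have := hgr (m+1) (by omega) (by omega)
                simpa using this
              · have hmeq : m = p := by omega
                rw [hmeq]
                exact hpe
            rw [← step, hm']
          · have : r = m + 1 := by omega
            rw [this]
      have hrn : r < n := by omega
      have hdget : σ[r]? = some (σ[r]'hrn) := List.getElem?_eq_getElem hrn
      set d := σ[r]'hrn with hd
      have hrm1 : r - 1 < n := by omega
      have hdm : σ[r-1]? = some (!d) := by
        rw [List.getElem?_eq_getElem hrm1]
        have hne2 : σ[r-1]'hrm1 ≠ d := by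
          intro h
          apply hrspec.2
          rw [List.getElem?_eq_getElem hrm1, h, hdget]
        rw [bool_eq_not hne2]
      set E : ℕ → Prop := fun j => p + 2 ≤ j ∧ (j + 1 = n ∨ σ[j]? ≠ some d) with hEdef
      have hEex : ∃ j, E j := ⟨n - 1, by omega, Or.inl (by omega)⟩
      set e := Nat.find hEex with he
      have hespec : E e := Nat.find_spec hEex
      have hele : e ≤ n - 1 := Nat.find_le ⟨by omega, Or.inl (by omega)⟩
      have hpe2 : p + 2 ≤ e := hespec.1
      have full : ∀ j, r ≤ j → j < e → σ[j]? = some d := by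
        intro j hj1 hj2
        rcases Nat.lt_or_ge j (p+2) with hc1 | hc1
        · rw [chain j (by omega) hj1, hdget]
        · have hnE := Nat.find_min hEex hj2
          by_contra hne
          exact hnE ⟨hc1, Or.inr hne⟩
      have he3 : r + 3 ≤ e := by omega
      have hseg : σ.drop r = List.replicate (e - r) d ++ σ.drop e :=
        drop_eq_rep σ r e d (by omega) (by omega) full
      have hsplit1 : σ.drop (r-1) = (!d) :: σ.drop r := by
        rw [List.drop_eq_getElem_cons hrm1]
        have v1 : σ[r-1]'hrm1 = !d := by
          have := hdm
          rw [List.getElem?_eq_getElem hrm1] at this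
          exact Option.some.inj this
        rw [v1, show r - 1 + 1 = r by omega]
      by_cases hlast : σ[e]? = some d
      · -- run extends to the final digit: flip the star
        have hen : e + 1 = n := by
          rcases hespec.2 with h | h
          · exact h
          · exact absurd hlast h
        have hde : σ.drop e = [d] := by
          rw [List.drop_eq_getElem_cons (show e < σ.length by omega)]
          have h2 : σ.drop (e+1) = [] := List.drop_eq_nil_of_le (by omega)
          have v2 : σ[e]'(by omega) = d := by
            have := hlast
            rw [List.getElem?_eq_getElem (show e < σ.length by omega)] at this
            exact Option.some.inj this
          rw [h2, v2]
        have hσeq : σ = σ.take (r-1) ++ ((!d) :: (List.replicate (e-r) d ++ [d])) := by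
          conv_lhs => rw [← List.take_append_drop (r-1) σ, hsplit1, hseg, hde]
        have hdl : σ.dropLast = σ.take (r-1) ++ ((!d) :: List.replicate (e-r) d) := by
          conv_lhs => rw [hσeq]
          rw [show (σ.take (r-1) ++ ((!d) :: (List.replicate (e-r) d ++ [d])))
              = (σ.take (r-1) ++ ((!d) :: List.replicate (e-r) d)) ++ [d] by simp]
          rw [List.dropLast_concat]
        apply h1
        refine ⟨σ.dropLast ++ [!d], ⟨?_, ?_⟩, σ.take (r-1), [], e - r, by omega, ?_⟩
        · rw [List.length_append, List.length_dropLast]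
          simp
          omega
        · rw [List.dropLast_concat]
        · rcases Bool.dichotomy d with hdv | hdv
          · left
            rw [hdl]
            simp [hdv]
          · right
            rw [hdl]
            simp [hdv]
      · -- genuine right bracket inside the code
        have hevn : e < n := by omega
        have hev : σ[e]'hevn ≠ d := by
          intro h
          apply hlast
          rw [List.getElem?_eq_getElem hevn, h]
        have hde : σ.drop e = (!d) :: σ.drop (e+1) := by
          rw [List.drop_eq_getElem_cons hevn, bool_eq_not hev]
        have hσeq : σ = σ.take (r-1)
            ++ ((!d) :: (List.replicate (e-r) d ++ ((!d) :: σ.drop (e+1)))) := by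
          conv_lhs => rw [← List.take_append_drop (r-1) σ, hsplit1, hseg, hde]
        apply h1
        refine ⟨σ, ⟨rfl, rfl⟩, σ.take (r-1), σ.drop (e+1), e - r, by omega, ?_⟩
        rcases Bool.dichotomy d with hdv | hdv
        · left
          conv_lhs => rw [hσeq]
          simp [hdv]
        · right
          conv_lhs => rw [hσeq]
          simp [hdv]
    -- parity sublemma
    have parity : ∀ p q, Pp p → Pp q → p < q → (q - p) % 2 = 0 := by
      intro p q hp hq hpq
      by_contra hodd
      have hodd' : (q - p) % 2 = 1 := by omega
      rcases Nat.lt_or_ge q (p + 2) with hq1 | hq1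
      · -- q = p + 1 : triple, contradicts run-start at q
        have hqp1 : q = p + 1 := by omega
        apply runstart q hq
        rw [hqp1]
        simpa using hp.2.2
      · have hq3 : p + 3 ≤ q := by omega
        have hpn : p < n := by
          have := hp.2.1
          omega
        have hdget : σ[p]? = some (σ[p]'hpn) := List.getElem?_eq_getElem hpn
        set d := σ[p]'hpn with hd
        have hd1 : σ[p+1]? = some d := by rw [← hp.2.2, hdget]
        have hpm1 : p - 1 < n := by omega
        have hdm : σ[p-1]? = some (!d) := by
          rw [List.getElem?_eq_getElem hpm1]
          have hne2 : σ[p-1]'hpm1 ≠ d := by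
            intro h
            apply runstart p hp
            rw [List.getElem?_eq_getElem hpm1, h, hdget]
          rw [bool_eq_not hne2]
        have hqn : q < n := by
          have := hq.2.1
          omega
        have hcget : σ[q]? = some (σ[q]'hqn) := List.getElem?_eq_getElem hqn
        set cv := σ[q]'hqn with hcv
        have hc1 : σ[q+1]? = some cv := by rw [← hq.2.2, hcget]
        apply h2
        refine ⟨σ.take (p-1), (σ.drop (p+2)).take (q-p-2), σ.drop (q+2), d, cv, ?_, ?_, ?_⟩
        · have hlen : ((σ.drop (p+2)).take (q-p-2)).length = q-p-2 := by
            simp only [List.length_take, List.length_drop]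
            omega
          rw [hlen, Nat.odd_iff]
          omega
        · apply List.length_pos_iff.mp
          simp only [List.length_drop]
          have := hq.2.1
          omega
        · have v1 : σ[p-1]'hpm1 = !d := by
            have := hdm
            rw [List.getElem?_eq_getElem hpm1] at this
            exact Option.some.inj this
          have hp1n : p + 1 < n := by omega
          have v3 : σ[p+1]'hp1n = d := by
            have := hd1
            rw [List.getElem?_eq_getElem hp1n] at this
            exact Option.some.inj this
          have hq1n : q + 1 < n := by omega
          have v5 : σ[q+1]'hq1n = cv := by
            have := hc1
            rw [List.getElem?_eq_getElem hq1n] at this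
            exact Option.some.inj this
          have s1 : σ.drop (p-1) = (!d) :: d :: d :: σ.drop (p+2) := by
            rw [List.drop_eq_getElem_cons hpm1, v1, show p - 1 + 1 = p by omega,
              List.drop_eq_getElem_cons hpn, List.drop_eq_getElem_cons hp1n, v3]
          have s2 : σ.drop (p+2) = (σ.drop (p+2)).take (q-p-2) ++ σ.drop q := by
            conv_lhs => rw [← List.take_append_drop (q-p-2) (σ.drop (p+2))]
            congr 1
            rw [List.drop_drop]
            congr 1
            omega
          have s3 : σ.drop q = cv :: cv :: σ.drop (q+2) := by
            rw [List.drop_eq_getElem_cons hqn, List.drop_eq_getElem_cons hq1n, v5]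
          conv_lhs => rw [← List.take_append_drop (p-1) σ, s1, s2, s3]
          simp
    -- main case split
    by_cases hPex : ∃ p, Pp p
    · obtain ⟨p0, hp0⟩ := hPex
      set t := if (p0 - k) % 2 = 1 then k else k - 1 with htdef
      have htv : ((p0 - k) % 2 = 1 ∧ t = k) ∨ ((p0 - k) % 2 = 0 ∧ t = k - 1) := by
        rw [htdef]
        split
        · exact Or.inl ⟨by assumption, rfl⟩
        · exact Or.inr ⟨by omega, rfl⟩
      have htk : t ≤ k := by rcases htv with ⟨_, h⟩ | ⟨_, h⟩ <;> omega
      refine isAlmostAlt_of_goodStar σ t c ?_ ?_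
      · have e1 : σ.take t = (σ.take k).take t := by
          rw [List.take_take]
          congr 1
          omega
        rw [e1, htake, List.take_replicate]
        congr 1
        omega
      · apply goodStar_of_pairs
        intro i hi
        rw [List.getElem?_drop, List.getElem?_drop]
        intro heq
        rw [List.length_drop] at hi
        set p := t + 2*i with hpdef
        have heq' : σ[p]? = σ[p+1]? := by
          rw [hpdef]
          rw [show t + 2*i + 1 = t + (2*i+1) by omega]
          exact heq
        have hp2 : p + 2 < n := by omega
        rcases Nat.lt_or_ge p k with hpk | hpk
        · have hpe : p = k - 1 := by omega
          have e1 : σ[p]? = some c := hbelow p hpk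
          have e2 : σ[p+1]? = some (!c) := by
            rw [show p + 1 = k by omega]
            exact hkc
          rw [e1, e2] at heq'
          have : c = !c := Option.some.inj heq'
          cases c <;> simp at this
        · have hPp2 : Pp p := ⟨hpk, hp2, heq'⟩
          have hpar : (p ≤ p0 ∧ (p0 - p) % 2 = 0) ∨ (p0 ≤ p ∧ (p - p0) % 2 = 0) := by
            rcases lt_trichotomy p p0 with h | h | h
            · exact Or.inl ⟨by omega, parity p p0 hPp2 hp0 h⟩
            · exact Or.inl ⟨by omega, by omega⟩
            · exact Or.inr ⟨by omega, parity p0 p hp0 hPp2 h⟩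
          have hk0 : k ≤ p0 := hp0.1
          omega
    · refine isAlmostAlt_of_goodStar σ k c htake ?_
      apply goodStar_of_pairs
      intro i hi
      rw [List.getElem?_drop, List.getElem?_drop]
      intro heq
      rw [List.length_drop] at hi
      apply hPex
      refine ⟨k + 2*i, by omega, by omega, ?_⟩
      rw [show k + 2*i + 1 = k + (2*i+1) by omega]
      exact heq
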